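/- A bi-directed graph G is Markov equivalent to a directed acyclic graph if and only if some (equivalently, every) minimally oriented graph G^min of G contains no bi-directed edges. -/

import Mathlib

/-- Possible edge types between an ordered pair of distinct vertices of a
simple mixed graph.  `arrowTo` at `(v, w)` means `v → w`, `arrowFrom` means
`v ← w`, `undir` means `v − w` and `bidir` means `v ↔ w`. -/
inductive EType : Type
  | none | undir | arrowTo | arrowFrom | bidir
deriving DecidableEq

/-- The edge type seen from the reversed ordered pair of vertices. -/
def EType.mirror : EType → EType
  | .none => .none
  | .undir => .undir
  | .arrowTo => .arrowFrom
  | .arrowFrom => .arrowTo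
  | .bidir => .bidir

/-- A simple mixed graph: at most one edge (undirected, directed or
bi-directed) between any two distinct vertices, and no self loops. -/
structure MixedGraph (V : Type) where
  E : V → V → EType
  no_loop : ∀ v, E v v = .none
  symm : ∀ v w, E w v = (E v w).mirror

/-- `(a, b, c)` are three consecutive vertices on the path `p`. -/
def ConsecTriple {V : Type} (p : List V) (a b c : V) : Prop :=
  ∃ l1 l2, p = l1 ++ a :: b :: c :: l2

namespace MixedGraph

variable {V : Type} (G : MixedGraph V)

/-- `v − w` is an edge of `G`. -/
def Undir (v w : V) : Prop := G.E v w = .undir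

/-- `v → w` is an edge of `G`. -/
def Dir (v w : V) : Prop := G.E v w = .arrowTo

/-- `v ↔ w` is an edge of `G`. -/
def Bidir (v w : V) : Prop := G.E v w = .bidir

/-- `v` and `w` are adjacent (joined by some edge). -/
def Adj (v w : V) : Prop := G.E v w ≠ .none

/-- The edge between `a` and `b` has an arrowhead at `b`. -/
def HeadAt (a b : V) : Prop := G.E a b = .arrowTo ∨ G.E a b = .bidir

/-- Closed boundary: `v` together with its adjacent vertices. -/
def Bd (v : V) : Set V := insert v {w | G.Adj v w}

/-- A set of vertices is complete if all of its pairs of distinct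
vertices are adjacent. -/
def Complete (S : Set V) : Prop := ∀ v ∈ S, ∀ w ∈ S, v ≠ w → G.Adj v w

/-- A vertex is simplicial if its closed boundary is complete. -/
def Simplicial (v : V) : Prop := G.Complete (G.Bd v)

/-- `v` is an ancestor of `w`: `v = w` or there is a directed path from
`v` to `w`. -/
def Anc (v w : V) : Prop := Relation.ReflTransGen G.Dir v w

/-- The set of ancestors of vertices in `C`. -/
def anSet (C : Set V) : Set V := {v | ∃ c ∈ C, G.Anc v c}

/-- `G` is an ancestral graph. -/
def Ancestral : Prop :=
  (∀ v w, G.Dir v w → ¬ G.Anc w v) ∧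
  (∀ v w, G.Undir v w → ∀ u, ¬ G.HeadAt u v) ∧
  (∀ v w, G.Bidir v w → ¬ G.Anc v w)

/-- The boundary containment property. -/
def BdContain : Prop :=
  (∀ v w, G.Undir v w → G.Bd v = G.Bd w) ∧
  (∀ v w, G.Dir v w → G.Bd v ⊆ G.Bd w)

/-- `b` is a collider between consecutive neighbours `a` and `c`. -/
def Collider (a b c : V) : Prop := G.HeadAt a b ∧ G.HeadAt c b

/-- A path: a list of distinct vertices, consecutive ones adjacent. -/
def IsPath (p : List V) : Prop := p.Nodup ∧ p.Chain' G.Adj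

/-- `p` is an m-connecting path given `C`: every non-collider on it is
outside `C` and every collider on it is an ancestor of `C`. -/
def IsMConnPath (C : Set V) (p : List V) : Prop :=
  G.IsPath p ∧
  ∀ a b c, ConsecTriple p a b c →
    (G.Collider a b c → b ∈ G.anSet C) ∧ (¬ G.Collider a b c → b ∉ C)

/-- `v` and `w` are m-connected given `C`. -/
def MConn (v w : V) (C : Set V) : Prop :=
  ∃ p, G.IsMConnPath C p ∧ p.head? = some v ∧ p.getLast? = some w

/-- `v` and `w` are m-separated given `C`. -/
def MSep (v w : V) (C : Set V) : Prop := ¬ G.MConn v w C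

/-- A maximal (ancestral) graph: every pair of distinct non-adjacent
vertices is m-separated given some set. -/
def Maximal : Prop :=
  ∀ v w, v ≠ w → ¬ G.Adj v w → ∃ C : Set V, v ∉ C ∧ w ∉ C ∧ G.MSep v w C

/-- `G` is a bi-directed graph. -/
def Bidirected : Prop := ∀ v w, G.E v w = .none ∨ G.E v w = .bidir

/-- `G` is an undirected graph. -/
def UndirectedG : Prop := ∀ v w, G.E v w = .none ∨ G.E v w = .undir

/-- `G` is a directed acyclic graph. -/
def IsDAG : Prop :=
  (∀ v w, G.E v w = .none ∨ G.E v w = .arrowTo ∨ G.E v w = .arrowFrom) ∧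
  (∀ v w, G.Dir v w → ¬ G.Anc w v)

/-- `G` and `H` have the same skeleton. -/
def SameSkeleton (H : MixedGraph V) : Prop := ∀ v w, G.Adj v w ↔ H.Adj v w

/-- `G` and `H` are Markov equivalent: their m-separation relations
coincide. -/
def MarkovEquiv (H : MixedGraph V) : Prop :=
  ∀ v w (C : Set V), v ≠ w → v ∉ C → w ∉ C → (G.MSep v w C ↔ H.MSep v w C)

open Classical in
/-- The edge map obtained from `G` by dropping all arrowheads at
simplicial vertices. -/
noncomputable def dropE (v w : V) : EType :=
  match G.E v w with
  | .none => .none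
  | .undir => .undir
  | .arrowTo => if G.Simplicial w then .undir else .arrowTo
  | .arrowFrom => if G.Simplicial v then .undir else .arrowFrom
  | .bidir =>
      if G.Simplicial v then (if G.Simplicial w then .undir else .arrowTo)
      else (if G.Simplicial w then .arrowFrom else .bidir)

/-- The graph obtained from `G` by dropping all arrowheads at simplicial
vertices; for a bi-directed graph `G` this is the simplicial graph `Gˢ`. -/
noncomputable def drop : MixedGraph V where
  E := G.dropE
  no_loop v := by simp [dropE, G.no_loop]
  symm v w := by
    unfold dropE
    rw [G.symm v w]
    cases h : G.E v w <;>
      simp only [EType.mirror] <;> split_ifs <;> simp_all [EType.mirror]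

open Classical in
/-- The edge map of the minimally oriented graph `G^min_<`: starting from
the simplicial graph, each bi-directed edge `v ↔ w` with `Bd v ⊆ Bd w`
and `v < w` is replaced by `v → w`. -/
noncomputable def gminE [LinearOrder V] (v w : V) : EType :=
  match G.dropE v w with
  | .bidir =>
      if G.Bd v ⊆ G.Bd w ∧ v < w then .arrowTo
      else if G.Bd w ⊆ G.Bd v ∧ w < v then .arrowFrom
      else .bidir
  | e => e

/-- The graph `G^min_<` produced by Algorithm 4.2 from `G` and the total
order on `V`. -/
noncomputable def gmin [LinearOrder V] : MixedGraph V where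
  E := G.gminE
  no_loop v := by
    have h := G.drop.no_loop v
    simp only [drop] at h
    simp [gminE, h]
  symm v w := by
    have h := G.drop.symm v w
    simp only [drop] at h
    unfold gminE
    rw [h]
    cases hE : G.dropE v w <;> simp only [EType.mirror]
    case bidir =>
      by_cases c1 : G.Bd v ⊆ G.Bd w ∧ v < w
      · have c2 : ¬ (G.Bd w ⊆ G.Bd v ∧ w < v) := fun h' => lt_asymm c1.2 h'.2
        simp [c1, c2, EType.mirror]
      · by_cases c2 : G.Bd w ⊆ G.Bd v ∧ w < v
        · simp [c1, c2, EType.mirror]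
        · simp [c1, c2, EType.mirror]

/-- Total number of arrowheads of `G`: the number of directed edges plus
twice the number of bi-directed edges. -/
noncomputable def arr : ℕ :=
  {p : V × V | G.Dir p.1 p.2}.ncard + {p : V × V | G.Bidir p.1 p.2}.ncard

end MixedGraph

/-- `Gm` is a minimally oriented graph for `G`. -/
def MinOriented {V : Type} (G Gm : MixedGraph V) : Prop :=
  Gm.Ancestral ∧ Gm.Maximal ∧ G.MarkovEquiv Gm ∧
  ∀ H : MixedGraph V, H.Ancestral → H.Maximal → G.MarkovEquiv H → Gm.arr ≤ H.arr
namespace MixedGraph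

variable {V : Type} {G K H : MixedGraph V}

lemma adj_comm {v w : V} : G.Adj v w ↔ G.Adj w v := by
  unfold Adj
  rw [G.symm v w]
  cases G.E v w <;> simp [EType.mirror]

lemma adj_ne {v w : V} (h : G.Adj v w) : v ≠ w := by
  rintro rfl; exact h (G.no_loop v)

lemma mem_bd_iff {v w : V} : w ∈ G.Bd v ↔ (w = v ∨ G.Adj v w) := by
  simp [Bd]

lemma mem_bd_self (v : V) : v ∈ G.Bd v := mem_bd_iff.mpr (Or.inl rfl)

lemma mem_bd_of_adj {v w : V} (h : G.Adj v w) : w ∈ G.Bd v := mem_bd_iff.mpr (Or.inr h)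

lemma bd_comm {v w : V} : w ∈ G.Bd v ↔ v ∈ G.Bd w := by
  rw [mem_bd_iff, mem_bd_iff]
  constructor
  · rintro (rfl | h)
    · exact Or.inl rfl
    · exact Or.inr (adj_comm.mp h)
  · rintro (rfl | h)
    · exact Or.inl rfl
    · exact Or.inr (adj_comm.mp h)

lemma undir_symm {v w : V} (h : G.Undir v w) : G.Undir w v := by
  unfold Undir at *
  rw [G.symm v w, h]; rfl

lemma bidir_symm {v w : V} (h : G.Bidir v w) : G.Bidir w v := by
  unfold Bidir at *
  rw [G.symm v w, h]; rfl

lemma dir_rev {v w : V} (h : G.E v w = .arrowFrom) : G.Dir w v := by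
  unfold Dir
  rw [G.symm v w, h]; rfl

/-! ### List helpers -/

lemma chain'_pair {R : V → V → Prop} :
    ∀ (l1 : List V) {p : List V} {x y : V} {l2 : List V},
      p.Chain' R → p = l1 ++ x :: y :: l2 → R x y
  | [], p, x, y, l2, hc, hp => by subst hp; exact (List.isChain_cons_cons.mp hc).1
  | a :: l1, p, x, y, l2, hc, hp => by
      subst hp; exact chain'_pair l1 hc.tail rfl

lemma head?_decomp {p l1 : List V} {x v : V} {l2 : List V}
    (hp : p = l1 ++ x :: l2) (hh : p.head? = some v) : (l1 = [] ∧ v = x) ∨ v ∈ l1 := by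
  cases l1 with
  | nil => subst hp; simp at hh; exact Or.inl ⟨rfl, hh.symm⟩
  | cons a t => subst hp; simp at hh; subst hh; exact Or.inr (by simp)

lemma getLast?_decomp {p l1 : List V} {x w : V} {l2 : List V}
    (hp : p = l1 ++ x :: l2) (hl : p.getLast? = some w) : (l2 = [] ∧ w = x) ∨ w ∈ l2 := by
  cases l2 with
  | nil =>
      subst hp
      rw [List.getLast?_concat] at hl
      exact Or.inl ⟨rfl, (Option.some_injective _ hl).symm⟩
  | cons c t =>
      subst hp
      have : (l1 ++ x :: c :: t) = (l1 ++ [x]) ++ (c :: t) := by simp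
      rw [this, List.getLast?_append_of_ne_nil _ (by simp)] at hl
      rcases List.mem_getLast?_eq_getLast hl with ⟨hne, rfl⟩
      exact Or.inr (List.getLast_mem hne)

end MixedGraph
namespace MixedGraph

variable {V : Type} {G K H : MixedGraph V}

lemma consecTriple_three {x y z a b c : V} (h : ConsecTriple [x, y, z] a b c) :
    a = x ∧ b = y ∧ c = z := by
  obtain ⟨l1, l2, heq⟩ := h
  have hlen := congrArg List.length heq
  simp at hlen
  have h1 : l1 = [] := List.length_eq_zero_iff.mp (by omega)
  have h2 : l2 = [] := List.length_eq_zero_iff.mp (by omega)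
  subst h1; subst h2
  simp at heq
  exact ⟨heq.1.symm, heq.2.1.symm, heq.2.2.symm⟩

lemma not_consecTriple_pair {x y a b c : V} : ¬ ConsecTriple [x, y] a b c := by
  rintro ⟨l1, l2, heq⟩
  have := congrArg List.length heq
  simp at this
  omega

lemma not_consecTriple_single {x a b c : V} : ¬ ConsecTriple [x] a b c := by
  rintro ⟨l1, l2, heq⟩
  have := congrArg List.length heq
  simp at this
  omega

lemma consecTriple_of_decomp {p l1 : List V} {pr x x' : V} {l2 : List V}
    (hp : p = l1 ++ x :: x' :: l2) (hpr : l1.getLast? = some pr) : ConsecTriple p pr x x' := by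
  have hne : l1 ≠ [] := by rintro rfl; simp at hpr
  rw [List.getLast?_eq_getLast hne] at hpr
  have hl1 : l1.dropLast ++ [pr] = l1 := by
    rw [← (Option.some_injective _ hpr)]
    exact List.dropLast_append_getLast hne
  exact ⟨l1.dropLast, l2, by rw [hp, ← hl1]; simp⟩

lemma mem_split_triple {p : List V} {b v w : V} (hb : b ∈ p) (hh : p.head? = some v)
    (hl : p.getLast? = some w) : b = v ∨ b = w ∨ ∃ a c, ConsecTriple p a b c := by
  obtain ⟨l1, l2, rfl⟩ := List.append_of_mem hb
  rcases head?_decomp rfl hh with ⟨rfl, rfl⟩ | hv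
  · exact Or.inl rfl
  rcases getLast?_decomp rfl hl with ⟨rfl, rfl⟩ | hw
  · exact Or.inr (Or.inl rfl)
  rcases List.eq_nil_or_concat l1 with rfl | ⟨t, a, rfl⟩
  · simp at hv
  cases l2 with
  | nil => simp at hw
  | cons c l2' =>
      refine Or.inr (Or.inr ⟨a, c, t, l2', by simp⟩)

lemma middle_ne {p l1 : List V} {a b c : V} {l2 : List V} {v w : V}
    (hp : p = l1 ++ a :: b :: c :: l2) (hnd : p.Nodup) (hh : p.head? = some v)
    (hl : p.getLast? = some w) : b ≠ v ∧ b ≠ w := by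
  have hnd' := hp ▸ hnd
  rw [List.nodup_append'] at hnd'
  obtain ⟨h1, h2, hdisj⟩ := hnd'
  constructor
  · rcases head?_decomp hp hh with ⟨rfl, rfl⟩ | hv
    · -- v = a
      rintro rfl
      exact (List.nodup_cons.mp h2).1 (by simp)
    · rintro rfl
      exact hdisj hv (by simp)
  · have hp2 : p = (l1 ++ [a, b]) ++ c :: l2 := by rw [hp]; simp
    rcases getLast?_decomp hp2 hl with ⟨rfl, rfl⟩ | hw
    · -- w = c
      rintro rfl
      have := (List.nodup_cons.mp (List.nodup_cons.mp h2).2).1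
      exact this (by simp)
    · rintro rfl
      have hbn : b ∉ c :: l2 := (List.nodup_cons.mp (List.nodup_cons.mp h2).2).1
      exact hbn (by simp [hw])

lemma chain'_shortcut {R : V → V → Prop} {l1 : List V} {a b c : V} {l2 : List V}
    (h : List.Chain' R (l1 ++ a :: b :: c :: l2)) (hac : R a c) :
    List.Chain' R (l1 ++ a :: c :: l2) := by
  rw [List.Chain', List.isChain_append] at h ⊢
  obtain ⟨h1, h2, h3⟩ := h
  refine ⟨h1, ?_, by simpa using h3⟩
  rw [List.isChain_cons_cons]
  exact ⟨hac, ((List.isChain_cons_cons.mp (List.isChain_cons_cons.mp h2).2).2)⟩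

lemma head?_congr (l1 : List V) (a : V) (l2 l2' : List V) :
    (l1 ++ a :: l2).head? = (l1 ++ a :: l2').head? := by
  cases l1 <;> rfl

lemma getLast?_shortcut (l1 : List V) (a b c : V) (l2 : List V) :
    (l1 ++ a :: c :: l2).getLast? = (l1 ++ a :: b :: c :: l2).getLast? := by
  have h1 : l1 ++ a :: c :: l2 = (l1 ++ [a]) ++ (c :: l2) := by simp
  have h2 : l1 ++ a :: b :: c :: l2 = (l1 ++ [a, b]) ++ (c :: l2) := by simp
  rw [h1, h2, List.getLast?_append_of_ne_nil _ (by simp),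
    List.getLast?_append_of_ne_nil _ (by simp)]

/-! ### The connection graph -/

/-- The simple graph on the vertex set `S` with the adjacencies of `G`. -/
def conGraph (G : MixedGraph V) (S : Set V) : SimpleGraph V where
  Adj a b := a ≠ b ∧ G.Adj a b ∧ a ∈ S ∧ b ∈ S
  symm := by
    constructor
    rintro a b ⟨h1, h2, h3, h4⟩
    exact ⟨h1.symm, adj_comm.mp h2, h4, h3⟩
  loopless := by constructor; rintro a ⟨h, -⟩; exact h rfl

lemma reach_of_chain' (SG : SimpleGraph V) :
    ∀ (p : List V) {v w : V}, p.Chain' SG.Adj → p.head? = some v → p.getLast? = some w →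
      SG.Reachable v w
  | [], v, w, _, hh, _ => by simp at hh
  | [x], v, w, _, hh, hl => by
      simp at hh hl; subst hh; subst hl; rfl
  | x :: y :: t, v, w, hc, hh, hl => by
      simp at hh; subst hh
      have h1 := (List.isChain_cons_cons.mp hc).1
      have h2 := (List.isChain_cons_cons.mp hc).2
      have hl' : (y :: t).getLast? = some w := by
        rwa [List.getLast?_cons_cons] at hl
      exact (h1.reachable).trans (reach_of_chain' SG (y :: t) h2 rfl hl')

lemma chain'_conGraph {S : Set V} :
    ∀ {p : List V}, p.Chain' G.Adj → (∀ b ∈ p, b ∈ S) → p.Chain' (conGraph G S).Adj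
  | [], _, _ => List.isChain_nil
  | [x], _, _ => List.isChain_singleton x
  | x :: y :: t, hc, hm => by
      rw [List.Chain', List.isChain_cons_cons] at hc ⊢
      exact ⟨⟨adj_ne hc.1, hc.1, hm x (by simp), hm y (by simp)⟩,
        chain'_conGraph hc.2 (fun b hb => hm b (by simp [hb]))⟩

end MixedGraph
namespace MixedGraph

variable {V : Type} {G K H : MixedGraph V}

/-! ### Bi-directed graphs -/

lemma bidirected_no_dir (hG : G.Bidirected) (a b : V) : ¬ G.Dir a b := by
  intro h
  have h2 : G.E a b = .arrowTo := h
  rcases hG a b with h' | h' <;> rw [h'] at h2 <;> cases h2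

lemma bidirected_anSet (hG : G.Bidirected) (C : Set V) : G.anSet C = C := by
  ext x
  constructor
  · rintro ⟨c, hc, hanc⟩
    rcases Relation.reflTransGen_iff_eq_or_transGen.mp hanc with h | h
    · exact h ▸ hc
    · cases h with
      | single h' => exact absurd h' (bidirected_no_dir hG _ _)
      | tail _ h' => exact absurd h' (bidirected_no_dir hG _ _)
  · intro hx
    exact ⟨x, hx, Relation.ReflTransGen.refl⟩

lemma bidirected_headAt (hG : G.Bidirected) {a b : V} (h : G.Adj a b) : G.HeadAt a b := by
  rcases hG a b with h' | h'
  · exact absurd h' h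
  · exact Or.inr h'

lemma bidirected_mconn_iff (hG : G.Bidirected) {v w : V} {C : Set V} (hv : v ∉ C) (hw : w ∉ C) :
    G.MConn v w C ↔ (conGraph G (insert v (insert w C))).Reachable v w := by
  set S : Set V := insert v (insert w C) with hS
  constructor
  · rintro ⟨p, ⟨⟨hnd, hch⟩, htr⟩, hh, hl⟩
    have hmem : ∀ b ∈ p, b ∈ S := by
      intro b hb
      rcases mem_split_triple hb hh hl with rfl | rfl | ⟨a, c, htrip⟩
      · exact Set.mem_insert _ _
      · exact Set.mem_insert_of_mem _ (Set.mem_insert _ _)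
      · obtain ⟨l1, l2, hp⟩ := htrip
        have hab : G.Adj a b := chain'_pair l1 hch hp
        have hbc : G.Adj b c :=
          chain'_pair (l1 ++ [a]) hch (show _ = (l1 ++ [a]) ++ b :: c :: l2 by simp [hp])
        have hcol : G.Collider a b c :=
          ⟨bidirected_headAt hG hab, bidirected_headAt hG (adj_comm.mp hbc)⟩
        have := (htr a b c ⟨l1, l2, hp⟩).1 hcol
        rw [bidirected_anSet hG] at this
        exact Set.mem_insert_of_mem _ (Set.mem_insert_of_mem _ this)
    exact reach_of_chain' _ p (chain'_conGraph hch hmem) hh hl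
  · intro h
    classical
    obtain ⟨q⟩ := h
    let pp := q.toPath
    have hnd : pp.1.support.Nodup := pp.2.support_nodup
    have hchS : pp.1.support.Chain' (conGraph G S).Adj := pp.1.isChain_adj_support
    have hch : pp.1.support.Chain' G.Adj := hchS.imp (fun _ _ h => h.2.1)
    have hh : pp.1.support.head? = some v := by rw [pp.1.support_eq_cons]; rfl
    have hl : pp.1.support.getLast? = some w := by
      rw [List.getLast?_eq_getLast pp.1.support_ne_nil, pp.1.getLast_support]
    refine ⟨pp.1.support, ⟨⟨hnd, hch⟩, ?_⟩, hh, hl⟩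
    intro a b c htrip
    obtain ⟨l1, l2, hp⟩ := htrip
    have hab : G.Adj a b := chain'_pair l1 hch hp
    have hbc : G.Adj b c :=
      chain'_pair (l1 ++ [a]) hch (show _ = (l1 ++ [a]) ++ b :: c :: l2 by simp [hp])
    have hcol : G.Collider a b c :=
      ⟨bidirected_headAt hG hab, bidirected_headAt hG (adj_comm.mp hbc)⟩
    constructor
    · intro _
      rw [bidirected_anSet hG]
      have hbS : b ∈ S := (chain'_pair l1 hchS hp).2.2.2
      have hbne := middle_ne hp hnd hh hl
      rcases hbS with rfl | hbS
      · exact absurd rfl hbne.1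
      rcases hbS with rfl | hbS
      · exact absurd rfl hbne.2
      · exact hbS
    · intro hnc
      exact absurd hcol hnc

lemma bidirected_msep (hG : G.Bidirected) {x y : V} (hna : ¬ G.Adj x y) (hne : x ≠ y) :
    G.MSep x y ∅ := by
  rw [MSep, bidirected_mconn_iff hG (Set.notMem_empty x) (Set.notMem_empty y)]
  rintro ⟨q⟩
  cases q with
  | nil => exact hne rfl
  | cons h q' =>
      obtain ⟨hne', hadj, -, hyS⟩ := h
      rcases hyS with rfl | hyS
      · exact hne' rfl
      rcases hyS with rfl | hyS
      · exact hna hadj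
      · exact hyS

lemma bidirected_maximal (hG : G.Bidirected) : G.Maximal := by
  intro v w hne hna
  exact ⟨∅, Set.notMem_empty _, Set.notMem_empty _, bidirected_msep hG hna hne⟩

end MixedGraph
namespace MixedGraph

variable {V : Type} {G K H : MixedGraph V}

/-! ### Orientations of a bi-directed graph along the boundary order -/

/-- `K` is an orientation of (the skeleton of) `G` compatible with the
boundary-inclusion preorder of `G`. -/
structure Orients (G K : MixedGraph V) : Prop where
  adj : ∀ a b, K.Adj a b ↔ G.Adj a b
  dir : ∀ a b, K.Dir a b → G.Bd a ⊆ G.Bd b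
  und : ∀ a b, K.Undir a b → G.Bd a ⊆ G.Bd b
  nb : ∀ a b, ¬ K.Bidir a b
  ua : ∀ a b u, K.Undir a b → ¬ K.HeadAt u a

lemma Orients.anSet_bd (hO : Orients G K) {C : Set V} {x : V} (hx : x ∈ K.anSet C) :
    ∃ c ∈ C, G.Bd x ⊆ G.Bd c := by
  obtain ⟨c, hc, hanc⟩ := hx
  refine ⟨c, hc, ?_⟩
  induction hanc using Relation.ReflTransGen.head_induction_on with
  | refl => exact subset_rfl
  | head hstep _ ih => exact (hO.dir _ _ hstep).trans ih

lemma Orients.bd_sub_of_not_headAt (hO : Orients G K) {a b : V} (hadj : K.Adj a b)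
    (hh : ¬ K.HeadAt a b) : G.Bd b ⊆ G.Bd a := by
  cases hE : K.E a b with
  | none => exact absurd hE hadj
  | undir => exact hO.und b a (undir_symm hE)
  | arrowTo => exact absurd (Or.inl hE) hh
  | arrowFrom => exact hO.dir b a (dir_rev hE)
  | bidir => exact absurd hE (hO.nb a b)

/-- In an orientation of a bi-directed graph, m-connection implies connection
through the conditioning set. -/
lemma Orients.reach_of_mconn (hO : Orients G K) {v w : V} {C : Set V}
    (h : K.MConn v w C) : (conGraph G (insert v (insert w C))).Reachable v w := by
  classical
  obtain ⟨p, ⟨⟨hnd, hch⟩, htr⟩, hh, hl⟩ := h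
  set S : Set V := insert v (insert w C) with hS
  set SC := conGraph G S with hSC
  have hsubS : insert v C ⊆ S := by
    intro x hx
    rcases hx with rfl | hx
    · exact Set.mem_insert _ _
    · exact Set.mem_insert_of_mem _ (Set.mem_insert_of_mem _ hx)
  have hwS : w ∈ S := Set.mem_insert_of_mem _ (Set.mem_insert _ _)
  -- from `Reachable v r` and `w ∈ Bd r` conclude
  have finish : ∀ r : V, SC.Reachable v r → r ∈ insert v C → w ∈ G.Bd r →
      SC.Reachable v w := by
    intro r hr hrC hw
    rcases mem_bd_iff.mp hw with rfl | hadj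
    · exact hr
    · exact hr.trans (SimpleGraph.Adj.reachable
        ⟨adj_ne hadj, hadj, hsubS hrC, hwS⟩)
  have key : ∀ (l2 l1 : List V) (x : V), p = l1 ++ x :: l2 →
      ((∃ r, SC.Reachable v r ∧ r ∈ insert v C ∧ G.Bd x ⊆ G.Bd r) ∨
       (∃ u r pr, SC.Reachable v r ∧ r ∈ insert v C ∧ G.Bd u ⊆ G.Bd r ∧ u ∈ G.Bd x ∧
          l1.getLast? = some pr ∧ K.HeadAt pr x)) →
      SC.Reachable v w := by
    intro l2
    induction l2 with
    | nil =>
        intro l1 x hp hinv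
        have hxw : x = w := by
          have := hl
          rw [hp, List.getLast?_concat] at this
          exact Option.some_injective _ this
        subst hxw
        rcases hinv with ⟨r, hr, hrC, hbd⟩ | ⟨u, r, _, hr, hrC, hbd, hu, -, -⟩
        · exact finish r hr hrC (hbd (mem_bd_self _))
        · exact finish r hr hrC (hbd (bd_comm.mp hu))
    | cons x' l2' ih =>
        intro l1 x hp hinv
        have hKadj : K.Adj x x' := chain'_pair l1 hch hp
        have hGadj : G.Adj x x' := (hO.adj _ _).mp hKadj
        have hp' : p = (l1 ++ [x]) ++ x' :: l2' := by simp [hp]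
        -- the step when we have the `J`-invariant at `x`
        have jstep : (∃ r, SC.Reachable v r ∧ r ∈ insert v C ∧ G.Bd x ⊆ G.Bd r) →
            SC.Reachable v w := by
          rintro ⟨r, hr, hrC, hbd⟩
          by_cases hhd : K.HeadAt x x'
          · exact ih (l1 ++ [x]) x' hp'
              (Or.inr ⟨x, r, x, hr, hrC, hbd, bd_comm.mp (mem_bd_of_adj hGadj),
                List.getLast?_concat, hhd⟩)
          · exact ih (l1 ++ [x]) x' hp'
              (Or.inl ⟨r, hr, hrC, (hO.bd_sub_of_not_headAt hKadj hhd).trans hbd⟩)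
        rcases hinv with hJ | ⟨u, r, pr, hr, hrC, hbd, hu, hprl, hhead⟩
        · exact jstep hJ
        · have htrip : ConsecTriple p pr x x' := consecTriple_of_decomp hp hprl
          by_cases hcol : K.Collider pr x x'
          · have hx : x ∈ K.anSet C := (htr pr x x' htrip).1 hcol
            obtain ⟨c', hc', hbdx⟩ := hO.anSet_bd hx
            have hc'bd : c' ∈ G.Bd r := hbd (bd_comm.mp (hbdx hu))
            have hreach : SC.Reachable v c' := by
              rcases mem_bd_iff.mp hc'bd with rfl | hadj
              · exact hr
              · exact hr.trans (SimpleGraph.Adj.reachable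
                  ⟨(adj_ne hadj), hadj, hsubS hrC, hsubS (Set.mem_insert_of_mem _ hc')⟩)
            exact jstep ⟨c', hreach, Set.mem_insert_of_mem _ hc', hbdx⟩
          · have hnh : ¬ K.HeadAt x' x := fun h2 => hcol ⟨hhead, h2⟩
            have hdirx : K.Dir x x' := by
              cases hE : K.E x x' with
              | none => exact absurd hE hKadj
              | undir => exact absurd hhead (hO.ua x x' pr hE)
              | arrowTo => exact hE
              | arrowFrom => exact absurd (Or.inl (dir_rev hE)) hnh
              | bidir => exact absurd hE (hO.nb x x')
            exact ih (l1 ++ [x]) x' hp'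
              (Or.inr ⟨u, r, x, hr, hrC, hbd, (hO.dir _ _ hdirx) hu,
                List.getLast?_concat, Or.inl hdirx⟩)
  cases p with
  | nil => simp at hh
  | cons x0 t =>
      have hx0 : x0 = v := by simpa using hh
      subst hx0
      exact key t [] x0 rfl (Or.inl ⟨x0, SimpleGraph.Reachable.refl _, Set.mem_insert _ _,
        subset_rfl⟩)

end MixedGraph
namespace MixedGraph

variable {V : Type} {G K H : MixedGraph V}

/-- In an orientation of a bi-directed graph, connection through the
conditioning set implies m-connection. -/
lemma Orients.mconn_of_reach (hO : Orients G K) {v w : V} {C : Set V} (hv : v ∉ C) (hw : w ∉ C)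
    (h : (conGraph G (insert v (insert w C))).Reachable v w) : K.MConn v w C := by
  classical
  set S : Set V := insert v (insert w C) with hS
  have main : ∀ (n : ℕ) (p : List V), p.length ≤ n → p.Nodup → p.Chain' G.Adj →
      p.head? = some v → p.getLast? = some w → (∀ b ∈ p, b ∈ S) → K.MConn v w C := by
    intro n
    induction n with
    | zero =>
        intro p hlen hnd hch hh hl hmem
        rw [List.length_eq_zero_iff.mp (Nat.le_zero.mp hlen)] at hh
        simp at hh
    | succ n ih =>
        intro p hlen hnd hch hh hl hmem
        by_cases hex : ∃ a b c l1 l2, p = l1 ++ a :: b :: c :: l2 ∧ ¬ K.Collider a b c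
        · obtain ⟨a, b, c, l1, l2, hp, hncol⟩ := hex
          have hGab : G.Adj a b := chain'_pair l1 hch hp
          have hGbc : G.Adj b c :=
            chain'_pair (l1 ++ [a]) hch (show _ = (l1 ++ [a]) ++ b :: c :: l2 by simp [hp])
          have hKab : K.Adj a b := (hO.adj _ _).mpr hGab
          have hKcb : K.Adj c b := (hO.adj _ _).mpr (adj_comm.mp hGbc)
          have hnac : a ≠ c := by
            intro hac
            have hnd' := hp ▸ hnd
            rw [List.nodup_append] at hnd'
            have := (List.nodup_cons.mp hnd'.2.1).1
            exact this (by simp [hac])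
          have hGac : G.Adj a c := by
            rcases not_and_or.mp hncol with h1 | h1
            · have hsub : G.Bd b ⊆ G.Bd a := hO.bd_sub_of_not_headAt hKab h1
              have : c ∈ G.Bd a := hsub (mem_bd_of_adj hGbc)
              rcases mem_bd_iff.mp this with rfl | h2
              · exact absurd rfl hnac
              · exact h2
            · have hsub : G.Bd b ⊆ G.Bd c := hO.bd_sub_of_not_headAt hKcb h1
              have : a ∈ G.Bd c := hsub (bd_comm.mp (mem_bd_of_adj hGab))
              rcases mem_bd_iff.mp this with rfl | h2
              · exact absurd rfl hnac
              · exact adj_comm.mp h2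
          refine ih (l1 ++ a :: c :: l2) ?_ ?_ ?_ ?_ ?_ ?_
          · have := congrArg List.length hp
            simp at this ⊢
            omega
          · have hsub : (l1 ++ a :: c :: l2).Sublist (l1 ++ a :: b :: c :: l2) :=
              (List.Sublist.refl l1).append
                (List.Sublist.cons₂ a (List.sublist_cons_self b (c :: l2)))
            exact hsub.nodup (hp ▸ hnd)
          · exact chain'_shortcut (hp ▸ hch) hGac
          · rw [head?_congr l1 a (c :: l2) (b :: c :: l2), ← hp]; exact hh
          · rw [getLast?_shortcut l1 a b c l2, ← hp]; exact hl
          · intro x hx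
            apply hmem
            rw [hp]
            simp at hx ⊢
            tauto
        · refine ⟨p, ⟨⟨hnd, hch.imp (fun a b hab => (hO.adj a b).mpr hab)⟩, ?_⟩, hh, hl⟩
          intro a b c htrip
          have hcol : K.Collider a b c := by
            by_contra hnc
            obtain ⟨l1, l2, hp⟩ := htrip
            exact hex ⟨a, b, c, l1, l2, hp, hnc⟩
          obtain ⟨l1, l2, hp⟩ := htrip
          have hbC : b ∈ C := by
            have hbS : b ∈ S := hmem b (by rw [hp]; simp)
            have hbne := middle_ne hp hnd hh hl
            rcases hbS with rfl | hbS
            · exact absurd rfl hbne.1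
            rcases hbS with rfl | hbS
            · exact absurd rfl hbne.2
            · exact hbS
          exact ⟨fun _ => ⟨b, hbC, Relation.ReflTransGen.refl⟩, fun hnc => absurd hcol hnc⟩
  obtain ⟨q⟩ := h
  classical
  let pp := q.toPath
  have hnd : pp.1.support.Nodup := pp.2.support_nodup
  have hchS : pp.1.support.Chain' (conGraph G S).Adj := pp.1.isChain_adj_support
  have hch : pp.1.support.Chain' G.Adj := hchS.imp (fun _ _ h => h.2.1)
  have hh : pp.1.support.head? = some v := by rw [pp.1.support_eq_cons]; rfl
  have hl : pp.1.support.getLast? = some w := by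
    rw [List.getLast?_eq_getLast pp.1.support_ne_nil, pp.1.getLast_support]
  have hmem : ∀ b ∈ pp.1.support, b ∈ S := by
    intro b hb
    rcases mem_split_triple hb hh hl with rfl | rfl | ⟨a, c, l1, l2, hp⟩
    · exact Set.mem_insert _ _
    · exact Set.mem_insert_of_mem _ (Set.mem_insert _ _)
    · exact (chain'_pair l1 hchS hp).2.2.2
  exact main pp.1.support.length pp.1.support le_rfl hnd hch hh hl hmem

end MixedGraph
namespace MixedGraph

variable {V : Type} {G K H : MixedGraph V}

lemma Orients.mconn_iff (hO : Orients G K) {v w : V} {C : Set V} (hv : v ∉ C) (hw : w ∉ C) :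
    K.MConn v w C ↔ (conGraph G (insert v (insert w C))).Reachable v w :=
  ⟨fun h => hO.reach_of_mconn h, fun h => hO.mconn_of_reach hv hw h⟩

lemma Orients.markovEquiv (hG : G.Bidirected) (hO : Orients G K) : G.MarkovEquiv K := by
  intro v w C _ hv hw
  rw [MSep, MSep, bidirected_mconn_iff hG hv hw, hO.mconn_iff hv hw]

lemma Orients.maximal (hO : Orients G K) : K.Maximal := by
  intro v w hne hna
  refine ⟨∅, Set.notMem_empty _, Set.notMem_empty _, ?_⟩
  rw [MSep, hO.mconn_iff (Set.notMem_empty v) (Set.notMem_empty w)]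
  rintro ⟨q⟩
  cases q with
  | nil => exact hne rfl
  | cons h q' =>
      obtain ⟨hne', hadj, -, hyS⟩ := h
      rcases hyS with rfl | hyS
      · exact hne' rfl
      rcases hyS with rfl | hyS
      · exact hna ((hO.adj _ _).mpr hadj)
      · exact hyS

/-! ### The strict boundary order -/

/-- The strict order used to orient edges: strict inclusion of boundaries, with
ties broken by a linear order on the vertices. -/
def sltP [LinearOrder V] (G : MixedGraph V) (a b : V) : Prop :=
  G.Bd a ⊂ G.Bd b ∨ (G.Bd a = G.Bd b ∧ a < b)

lemma sltP_le [LinearOrder V] {a b : V} (h : sltP G a b) : G.Bd a ⊆ G.Bd b := by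
  rcases h with h | ⟨h, -⟩
  · exact h.subset
  · exact h.le

lemma sltP_trans [LinearOrder V] {a b c : V} (h1 : sltP G a b) (h2 : sltP G b c) :
    sltP G a c := by
  rcases h1 with h1 | ⟨h1, h1'⟩ <;> rcases h2 with h2 | ⟨h2, h2'⟩
  · exact Or.inl (h1.trans h2)
  · exact Or.inl (h2 ▸ h1)
  · exact Or.inl (h1 ▸ h2)
  · exact Or.inr ⟨h1.trans h2, h1'.trans h2'⟩

lemma sltP_irrefl [LinearOrder V] (a : V) : ¬ sltP G a a := by
  rintro (h | ⟨-, h⟩)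
  · exact h.ne rfl
  · exact lt_irrefl a h

lemma sltP_asymm [LinearOrder V] {a b : V} (h : sltP G a b) : ¬ sltP G b a :=
  fun h' => sltP_irrefl a (sltP_trans h h')

lemma sltP_total [LinearOrder V] {a b : V} (hne : a ≠ b)
    (hcomp : G.Bd a ⊆ G.Bd b ∨ G.Bd b ⊆ G.Bd a) : sltP G a b ∨ sltP G b a := by
  by_cases he : G.Bd a = G.Bd b
  · rcases lt_or_gt_of_ne hne with h | h
    · exact Or.inl (Or.inr ⟨he, h⟩)
    · exact Or.inr (Or.inr ⟨he.symm, h⟩)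
  · rcases hcomp with h | h
    · exact Or.inl (Or.inl (ssubset_of_subset_of_ne h he))
    · exact Or.inr (Or.inl (ssubset_of_subset_of_ne h (fun h' => he h'.symm)))

lemma transGen_slt [LinearOrder V] (hslt : ∀ a b, K.Dir a b → sltP G a b) :
    ∀ {a b : V}, Relation.TransGen K.Dir a b → sltP G a b := by
  intro a b h
  induction h with
  | single h' => exact hslt _ _ h'
  | tail _ h' ih => exact sltP_trans ih (hslt _ _ h')

/-- Acyclicity from the strict order. -/
lemma no_cycle [LinearOrder V] (hslt : ∀ a b, K.Dir a b → sltP G a b) :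
    ∀ v w, K.Dir v w → ¬ K.Anc w v := by
  intro v w hd hanc
  rcases Relation.reflTransGen_iff_eq_or_transGen.mp hanc with h | h
  · subst h
    have h2 : K.E v v = .arrowTo := hd
    rw [K.no_loop v] at h2
    cases h2
  · exact sltP_asymm (hslt _ _ hd) (transGen_slt hslt h)

lemma Orients.ancestral [LinearOrder V] (hO : Orients G K)
    (hslt : ∀ a b, K.Dir a b → sltP G a b) : K.Ancestral :=
  ⟨no_cycle hslt, fun v w hu u => hO.ua v w u hu, fun v w hb => absurd hb (hO.nb v w)⟩

end MixedGraph
namespace MixedGraph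

variable {V : Type} {G K H : MixedGraph V}

/-! ### Skeleta of Markov equivalent maximal graphs -/

lemma adj_mconn {v w : V} (h : K.Adj v w) (C : Set V) : K.MConn v w C := by
  refine ⟨[v, w], ⟨⟨?_, ?_⟩, ?_⟩, rfl, by simp⟩
  · simp [adj_ne h]
  · simp [List.Chain', h]
  · intro a b c htrip
    exact absurd htrip not_consecTriple_pair

lemma skel_of_equiv (hGm : G.Maximal) (hHm : H.Maximal) (heq : G.MarkovEquiv H) :
    ∀ a b, G.Adj a b ↔ H.Adj a b := by
  intro a b
  constructor
  · intro hadj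
    by_contra hna
    have hne := adj_ne hadj
    obtain ⟨C, haC, hbC, hsep⟩ := hHm a b hne hna
    exact (heq a b C hne haC hbC).mpr hsep (adj_mconn hadj C)
  · intro hadj
    by_contra hna
    have hne := adj_ne hadj
    obtain ⟨C, haC, hbC, hsep⟩ := hGm a b hne hna
    exact (heq a b C hne haC hbC).mp hsep (adj_mconn hadj C)

/-! ### Forced colliders -/

lemma collider_forced (hG : G.Bidirected) (heq : G.MarkovEquiv H)
    (hskel : ∀ a b, G.Adj a b ↔ H.Adj a b) {x u y : V} (hxu : G.Adj x u) (huy : G.Adj u y)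
    (hxy : ¬ G.Adj x y) (hxyne : x ≠ y) : H.HeadAt x u ∧ H.HeadAt y u := by
  have hsep : H.MSep x y ∅ :=
    (heq x y ∅ hxyne (Set.notMem_empty x) (Set.notMem_empty y)).mp
      (bidirected_msep hG hxy hxyne)
  by_contra hcol
  apply hsep
  refine ⟨[x, u, y], ⟨⟨?_, ?_⟩, ?_⟩, rfl, by simp⟩
  · simp [adj_ne hxu, adj_ne huy, hxyne]
  · simp [List.Chain', List.isChain_cons_cons, (hskel x u).mp hxu, (hskel u y).mp huy]
  · intro a b c htrip
    obtain ⟨rfl, rfl, rfl⟩ := consecTriple_three htrip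
    refine ⟨fun hc => absurd ⟨hc.1, hc.2⟩ hcol, fun _ => Set.notMem_empty _⟩

lemma forced_bidir (hG : G.Bidirected) (heq : G.MarkovEquiv H)
    (hskel : ∀ a b, G.Adj a b ↔ H.Adj a b) {v w : V} (hadj : G.Adj v w)
    (h1 : ¬ G.Bd v ⊆ G.Bd w) (h2 : ¬ G.Bd w ⊆ G.Bd v) : H.Bidir v w := by
  obtain ⟨x, hxv, hxw⟩ := Set.not_subset.mp h1
  obtain ⟨y, hyw, hyv⟩ := Set.not_subset.mp h2
  have hxvne : x ≠ v := by
    rintro rfl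
    exact hxw (bd_comm.mp (mem_bd_of_adj hadj))
  have hywne : y ≠ w := by
    rintro rfl
    exact hyv (bd_comm.mp (mem_bd_of_adj (adj_comm.mp hadj)))
  have hxvadj : G.Adj x v := adj_comm.mp ((mem_bd_iff.mp hxv).resolve_left hxvne)
  have hywadj : G.Adj y w := adj_comm.mp ((mem_bd_iff.mp hyw).resolve_left hywne)
  have hxwne : x ≠ w := fun h => hxw (by rw [h]; exact mem_bd_self w)
  have hyvne : y ≠ v := fun h => hyv (by rw [h]; exact mem_bd_self v)
  have hxwnadj : ¬ G.Adj x w := fun h => hxw (bd_comm.mp (mem_bd_of_adj h))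
  have hyvnadj : ¬ G.Adj y v := fun h => hyv (bd_comm.mp (mem_bd_of_adj h))
  have hA := (collider_forced hG heq hskel hxvadj hadj hxwnadj hxwne).2
  have hB := (collider_forced hG heq hskel hywadj (adj_comm.mp hadj) hyvnadj hyvne).2
  -- hA : H.HeadAt w v,  hB : H.HeadAt v w
  rcases hB with hB | hB
  · rcases hA with hA | hA
    · rw [H.symm v w, hB] at hA
      cases hA
    · rw [H.symm v w, hB] at hA
      cases hA
  · exact hB

/-! ### Simplicial vertices -/

lemma simplicial_bd_subset {a b : V} (hs : G.Simplicial a) (hadj : G.Adj a b) :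
    G.Bd a ⊆ G.Bd b := by
  intro x hx
  by_cases hxb : x = b
  · rw [hxb]; exact mem_bd_self b
  · exact bd_comm.mp (mem_bd_of_adj (hs x hx b (mem_bd_of_adj hadj) hxb))

lemma simplicial_of_bd_eq {a b : V} (hs : G.Simplicial a) (he : G.Bd a = G.Bd b) :
    G.Simplicial b := by
  unfold Simplicial
  rw [← he]
  exact hs

lemma not_simplicial_witness {b : V} (hns : ¬ G.Simplicial b) :
    ∃ x y, G.Adj b x ∧ G.Adj b y ∧ x ≠ y ∧ ¬ G.Adj x y := by
  unfold Simplicial Complete at hns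
  push_neg at hns
  obtain ⟨x, hx, y, hy, hxy, hnxy⟩ := hns
  have hxb : x ≠ b := by
    rintro rfl
    exact hnxy ((mem_bd_iff.mp hy).elim (fun h => absurd h.symm hxy) id)
  have hyb : y ≠ b := by
    rintro rfl
    exact hnxy (adj_comm.mp ((mem_bd_iff.mp hx).elim (fun h => absurd h.symm (Ne.symm hxy)) id))
  exact ⟨x, y, (mem_bd_iff.mp hx).resolve_left hxb, (mem_bd_iff.mp hy).resolve_left hyb,
    hxy, hnxy⟩

lemma undir_simplicial (hG : G.Bidirected) (heq : G.MarkovEquiv H)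
    (hskel : ∀ a b, G.Adj a b ↔ H.Adj a b) (hanc : H.Ancestral) {a b : V}
    (hu : H.Undir a b) : G.Simplicial a := by
  by_contra hns
  obtain ⟨x, y, hbx, hby, hxy, hnxy⟩ := not_simplicial_witness hns
  have := (collider_forced hG heq hskel (adj_comm.mp hbx) hby hnxy hxy).1
  exact hanc.2.1 a b hu x this

end MixedGraph
namespace MixedGraph

variable {V : Type} {G K H : MixedGraph V}

/-! ### The two constructions -/

open Classical in
/-- The DAG obtained by orienting all edges of `G` along `sltP`. -/
noncomputable def dagOf [LinearOrder V] (G : MixedGraph V) : MixedGraph V where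
  E v w :=
    if G.Adj v w then
      (if sltP G v w then .arrowTo else if sltP G w v then .arrowFrom else .bidir)
    else .none
  no_loop v := by
    have : ¬ G.Adj v v := fun h => adj_ne h rfl
    simp [this]
  symm v w := by
    by_cases hadj : G.Adj v w
    · have hadj' : G.Adj w v := adj_comm.mp hadj
      by_cases h1 : sltP G v w
      · have h2 : ¬ sltP G w v := sltP_asymm h1
        simp [hadj, hadj', h1, h2, EType.mirror]
      · by_cases h2 : sltP G w v
        · simp [hadj, hadj', h1, h2, EType.mirror]
        · simp [hadj, hadj', h1, h2, EType.mirror]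
    · have hadj' : ¬ G.Adj w v := fun h => hadj (adj_comm.mp h)
      simp [hadj, hadj', EType.mirror]

open Classical in
/-- The maximal ancestral graph obtained by making edges between simplicial
vertices undirected and orienting all other edges of `G` along `sltP`. -/
noncomputable def magOf [LinearOrder V] (G : MixedGraph V) : MixedGraph V where
  E v w :=
    if G.Adj v w then
      (if G.Simplicial v ∧ G.Simplicial w then .undir
       else if sltP G v w then .arrowTo else if sltP G w v then .arrowFrom else .bidir)
    else .none
  no_loop v := by
    have : ¬ G.Adj v v := fun h => adj_ne h rfl
    simp [this]
  symm v w := by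
    by_cases hadj : G.Adj v w
    · have hadj' : G.Adj w v := adj_comm.mp hadj
      by_cases hs : G.Simplicial v ∧ G.Simplicial w
      · have hs' : G.Simplicial w ∧ G.Simplicial v := ⟨hs.2, hs.1⟩
        simp [hadj, hadj', hs, hs', EType.mirror]
      · have hs' : ¬ (G.Simplicial w ∧ G.Simplicial v) := fun h => hs ⟨h.2, h.1⟩
        by_cases h1 : sltP G v w
        · have h2 : ¬ sltP G w v := sltP_asymm h1
          simp [hadj, hadj', hs, hs', h1, h2, EType.mirror]
        · by_cases h2 : sltP G w v
          · simp [hadj, hadj', hs, hs', h1, h2, EType.mirror]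
          · simp [hadj, hadj', hs, hs', h1, h2, EType.mirror]
    · have hadj' : ¬ G.Adj w v := fun h => hadj (adj_comm.mp h)
      simp [hadj, hadj', EType.mirror]

section Constructions

variable [LinearOrder V]
variable (hcomp : ∀ a b, G.Adj a b → (G.Bd a ⊆ G.Bd b ∨ G.Bd b ⊆ G.Bd a))

include hcomp

lemma dagOf_E {a b : V} (hadj : G.Adj a b) :
    (sltP G a b ∧ (dagOf G).E a b = .arrowTo) ∨ (sltP G b a ∧ (dagOf G).E a b = .arrowFrom) := by
  rcases sltP_total (adj_ne hadj) (hcomp a b hadj) with h | h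
  · exact Or.inl ⟨h, by simp [dagOf, hadj, h]⟩
  · exact Or.inr ⟨h, by simp [dagOf, hadj, sltP_asymm h, h]⟩

lemma dagOf_orients : Orients G (dagOf G) := by
  constructor
  · intro a b
    constructor
    · intro h
      by_contra hna
      exact h (by simp [dagOf, hna])
    · intro h
      rcases dagOf_E hcomp h with ⟨-, h2⟩ | ⟨-, h2⟩ <;> rw [Adj, h2] <;> simp
  · intro a b h
    have h2 : (dagOf G).E a b = .arrowTo := h
    have hadj : G.Adj a b := by
      by_contra hna
      simp [dagOf, hna] at h2
    rcases dagOf_E hcomp hadj with ⟨h1, -⟩ | ⟨-, h3⟩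
    · exact sltP_le h1
    · rw [h2] at h3; cases h3
  · intro a b h
    have h2 : (dagOf G).E a b = .undir := h
    by_cases hadj : G.Adj a b
    · rcases dagOf_E hcomp hadj with ⟨-, h3⟩ | ⟨-, h3⟩ <;> rw [h2] at h3 <;> cases h3
    · simp [dagOf, hadj] at h2
  · intro a b h
    have h2 : (dagOf G).E a b = .bidir := h
    by_cases hadj : G.Adj a b
    · rcases dagOf_E hcomp hadj with ⟨-, h3⟩ | ⟨-, h3⟩ <;> rw [h2] at h3 <;> cases h3
    · simp [dagOf, hadj] at h2
  · intro a b u h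
    have h2 : (dagOf G).E a b = .undir := h
    by_cases hadj : G.Adj a b
    · rcases dagOf_E hcomp hadj with ⟨-, h3⟩ | ⟨-, h3⟩ <;> rw [h2] at h3 <;> cases h3
    · simp [dagOf, hadj] at h2

lemma dagOf_slt : ∀ a b, (dagOf G).Dir a b → sltP G a b := by
  intro a b h
  have h2 : (dagOf G).E a b = .arrowTo := h
  have hadj : G.Adj a b := by
    by_contra hna
    simp [dagOf, hna] at h2
  rcases dagOf_E hcomp hadj with ⟨h1, -⟩ | ⟨-, h3⟩
  · exact h1
  · rw [h2] at h3; cases h3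

lemma dagOf_isDAG : (dagOf G).IsDAG := by
  constructor
  · intro a b
    by_cases hadj : G.Adj a b
    · rcases dagOf_E hcomp hadj with ⟨-, h⟩ | ⟨-, h⟩
      · exact Or.inr (Or.inl h)
      · exact Or.inr (Or.inr h)
    · exact Or.inl (by simp [dagOf, hadj])
  · exact no_cycle (dagOf_slt hcomp)

lemma magOf_E {a b : V} (hadj : G.Adj a b) :
    (G.Simplicial a ∧ G.Simplicial b ∧ (magOf G).E a b = .undir) ∨
    (¬ (G.Simplicial a ∧ G.Simplicial b) ∧ sltP G a b ∧ (magOf G).E a b = .arrowTo) ∨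
    (¬ (G.Simplicial a ∧ G.Simplicial b) ∧ sltP G b a ∧ (magOf G).E a b = .arrowFrom) := by
  by_cases hs : G.Simplicial a ∧ G.Simplicial b
  · exact Or.inl ⟨hs.1, hs.2, by simp [magOf, hadj, hs]⟩
  · rcases sltP_total (adj_ne hadj) (hcomp a b hadj) with h | h
    · exact Or.inr (Or.inl ⟨hs, h, by simp [magOf, hadj, hs, h]⟩)
    · exact Or.inr (Or.inr ⟨hs, h, by simp [magOf, hadj, hs, sltP_asymm h, h]⟩)

lemma magOf_adj {a b : V} : (magOf G).Adj a b ↔ G.Adj a b := by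
  constructor
  · intro h
    by_contra hna
    exact h (by simp [magOf, hna])
  · intro h
    rcases magOf_E hcomp h with ⟨-, -, h2⟩ | ⟨-, -, h2⟩ | ⟨-, -, h2⟩ <;> rw [Adj, h2] <;> simp

lemma magOf_undir {a b : V} (h : (magOf G).Undir a b) :
    G.Adj a b ∧ G.Simplicial a ∧ G.Simplicial b := by
  have h2 : (magOf G).E a b = .undir := h
  by_cases hadj : G.Adj a b
  · rcases magOf_E hcomp hadj with ⟨hsa, hsb, -⟩ | ⟨-, -, h3⟩ | ⟨-, -, h3⟩
    · exact ⟨hadj, hsa, hsb⟩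
    · rw [h2] at h3; cases h3
    · rw [h2] at h3; cases h3
  · simp [magOf, hadj] at h2

lemma magOf_dir {a b : V} (h : (magOf G).Dir a b) :
    G.Adj a b ∧ ¬ (G.Simplicial a ∧ G.Simplicial b) ∧ sltP G a b := by
  have h2 : (magOf G).E a b = .arrowTo := h
  by_cases hadj : G.Adj a b
  · rcases magOf_E hcomp hadj with ⟨-, -, h3⟩ | ⟨hs, hsl, h3⟩ | ⟨-, -, h3⟩
    · rw [h2] at h3; cases h3
    · exact ⟨hadj, hs, hsl⟩
    · rw [h2] at h3; cases h3
  · simp [magOf, hadj] at h2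

lemma magOf_nb : ∀ a b, ¬ (magOf G).Bidir a b := by
  intro a b h
  have h2 : (magOf G).E a b = .bidir := h
  by_cases hadj : G.Adj a b
  · rcases magOf_E hcomp hadj with ⟨-, -, h3⟩ | ⟨-, -, h3⟩ | ⟨-, -, h3⟩ <;>
      rw [h2] at h3 <;> cases h3
  · simp [magOf, hadj] at h2

lemma magOf_head_not_simplicial {a b : V} (h : (magOf G).HeadAt a b) :
    G.Adj a b ∧ ¬ G.Simplicial b := by
  rcases h with h | h
  · obtain ⟨hadj, hs, hsl⟩ := magOf_dir hcomp h
    refine ⟨hadj, fun hsb => ?_⟩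
    have hba : G.Bd b ⊆ G.Bd a := simplicial_bd_subset hsb (adj_comm.mp hadj)
    rcases hsl with h1 | ⟨h1, -⟩
    · exact (ssubset_irrefl _ ) (h1.trans_le hba)
    · exact hs ⟨simplicial_of_bd_eq hsb h1.symm, hsb⟩
  · exact absurd h (magOf_nb hcomp a b)

lemma magOf_orients : Orients G (magOf G) := by
  constructor
  · intro a b; exact magOf_adj hcomp
  · intro a b h
    exact sltP_le (magOf_dir hcomp h).2.2
  · intro a b h
    obtain ⟨hadj, hsa, -⟩ := magOf_undir hcomp h
    exact simplicial_bd_subset hsa hadj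
  · exact magOf_nb hcomp
  · intro a b u hund hhead
    obtain ⟨-, hsa, -⟩ := magOf_undir hcomp hund
    exact (magOf_head_not_simplicial hcomp hhead).2 hsa

lemma magOf_ancestral : (magOf G).Ancestral :=
  (magOf_orients hcomp).ancestral (fun a b h => (magOf_dir hcomp h).2.2)

end Constructions

end MixedGraph
namespace MixedGraph

variable {V : Type} {G K H : MixedGraph V}

/-! ### DAGs are maximal -/

lemma IsDAG.head_dir {D : MixedGraph V} (hD : D.IsDAG) {a b : V} (h : D.HeadAt a b) :
    D.Dir a b := by
  rcases h with h | h
  · exact h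
  · rcases hD.1 a b with h' | h' | h' <;> rw [h'] at h <;> cases h

lemma IsDAG.not_both {D : MixedGraph V} (hD : D.IsDAG) (a b : V) :
    ¬ (D.HeadAt a b ∧ D.HeadAt b a) := by
  rintro ⟨h1, h2⟩
  have h1' : D.E a b = .arrowTo := hD.head_dir h1
  have h2' : D.E b a = .arrowTo := hD.head_dir h2
  rw [D.symm a b, h1'] at h2'
  cases h2'

lemma IsDAG.dir_of_not_head {D : MixedGraph V} (hD : D.IsDAG) {a b : V} (hadj : D.Adj a b)
    (h : ¬ D.HeadAt a b) : D.Dir b a := by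
  rcases hD.1 a b with h' | h' | h'
  · exact absurd h' hadj
  · exact absurd (Or.inl h') h
  · exact dir_rev h'

lemma anSet_of_anc {D : MixedGraph V} {S : Set V} {x y : V} (h : D.Anc x y)
    (hy : y ∈ D.anSet S) : x ∈ D.anSet S := by
  obtain ⟨c, hc, h2⟩ := hy
  exact ⟨c, hc, h.trans h2⟩

lemma dag_maximal {D : MixedGraph V} (hD : D.IsDAG) : D.Maximal := by
  intro v w hne hna
  set C : Set V := D.anSet {v, w} \ {v, w} with hC
  refine ⟨C, by simp [hC], by simp [hC], ?_⟩
  rintro ⟨p, ⟨⟨hnd, hch⟩, htr⟩, hh, hl⟩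
  have anC_sub : D.anSet C ⊆ D.anSet {v, w} := by
    rintro x ⟨c, hcC, hxc⟩
    obtain ⟨z, hz, hcz⟩ := hcC.1
    exact ⟨z, hz, hxc.trans hcz⟩
  -- rightward runs
  have Rrun : ∀ (l2 : List V) (x : V) (l1 : List V), p = l1 ++ x :: l2 →
      (l2 = [] ∨ ∃ x' l2', l2 = x' :: l2' ∧ D.Dir x x') → x ∈ D.anSet {v, w} := by
    intro l2
    induction l2 with
    | nil =>
        intro x l1 hp _
        have hxw : x = w := by
          have := hl
          rw [hp, List.getLast?_concat] at this
          exact Option.some_injective _ this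
        exact ⟨w, by simp, hxw ▸ Relation.ReflTransGen.refl⟩
    | cons y t ih =>
        intro x l1 hp hcase
        rcases hcase with h | ⟨x1, l21, heq, hdir⟩
        · cases h
        cases heq
        have hstep : D.Anc x y := Relation.ReflTransGen.single hdir
        have hp' : p = (l1 ++ [x]) ++ y :: t := by simp [hp]
        cases t with
        | nil => exact anSet_of_anc hstep (ih y (l1 ++ [x]) hp' (Or.inl rfl))
        | cons z t2 =>
            refine anSet_of_anc hstep ?_
            have htrip : ConsecTriple p x y z := ⟨l1, t2, by simp [hp]⟩
            by_cases hcol : D.Collider x y z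
            · exact anC_sub ((htr _ _ _ htrip).1 hcol)
            · have hnh : ¬ D.HeadAt z y := fun h2 => hcol ⟨Or.inl hdir, h2⟩
              have hadj : D.Adj z y := by
                have := chain'_pair (l1 ++ [x]) hch
                  (show _ = (l1 ++ [x]) ++ y :: z :: t2 by simp [hp])
                exact adj_comm.mp this
              exact ih y (l1 ++ [x]) hp' (Or.inr ⟨z, t2, rfl, hD.dir_of_not_head hadj hnh⟩)
  -- leftward runs
  have Lrun : ∀ (n : ℕ) (l1 : List V) (x : V) (l2 : List V), l1.length ≤ n →
      p = l1 ++ x :: l2 → (l1 = [] ∨ ∃ pr l1', l1 = l1' ++ [pr] ∧ D.Dir x pr) →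
      x ∈ D.anSet {v, w} := by
    intro n
    induction n with
    | zero =>
        intro l1 x l2 hlen hp hcase
        have hl1 : l1 = [] := List.length_eq_zero_iff.mp (Nat.le_zero.mp hlen)
        subst hl1
        have hxv : x = v := by
          rw [hp] at hh
          simpa using hh
        exact ⟨v, by simp, hxv ▸ Relation.ReflTransGen.refl⟩
    | succ n ih =>
        intro l1 x l2 hlen hp hcase
        rcases hcase with rfl | ⟨pr, l1', rfl, hdir⟩
        · have hxv : x = v := by
            rw [hp] at hh
            simpa using hh
          exact ⟨v, by simp, hxv ▸ Relation.ReflTransGen.refl⟩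
        · refine anSet_of_anc (Relation.ReflTransGen.single hdir) ?_
          have hp' : p = l1' ++ pr :: x :: l2 := by simp [hp]
          rcases List.eq_nil_or_concat l1' with rfl | ⟨l1'', pr', hl1'⟩
          · have hprv : pr = v := by
              rw [hp'] at hh
              simpa using hh
            exact ⟨v, by simp, hprv ▸ Relation.ReflTransGen.refl⟩
          · rw [List.concat_eq_append] at hl1'
            subst hl1'
            have htrip : ConsecTriple p pr' pr x := ⟨l1'', l2, by simp [hp']⟩
            by_cases hcol : D.Collider pr' pr x
            · exact anC_sub ((htr _ _ _ htrip).1 hcol)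
            · have hnh : ¬ D.HeadAt pr' pr := fun h2 => hcol ⟨h2, Or.inl hdir⟩
              have hadj : D.Adj pr' pr :=
                chain'_pair l1'' hch (show _ = l1'' ++ pr' :: pr :: (x :: l2) by simp [hp'])
              refine ih (l1'' ++ [pr']) pr (x :: l2) ?_ hp'
                (Or.inr ⟨pr', l1'', rfl, hD.dir_of_not_head hadj hnh⟩)
              have := congrArg List.length (rfl : l1'' ++ [pr'] ++ [pr] = l1'' ++ [pr'] ++ [pr])
              simp at hlen ⊢
              omega
  -- every internal non-collider leads to a contradiction
  have internal_collider : ∀ (a b c : V) (l1 l2 : List V), p = l1 ++ a :: b :: c :: l2 →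
      D.Collider a b c := by
    intro a b c l1 l2 hp
    by_contra hnc
    have hbnC : b ∉ C := (htr a b c ⟨l1, l2, hp⟩).2 hnc
    have hban : b ∈ D.anSet {v, w} := by
      rcases not_and_or.mp hnc with h1 | h1
      · -- no head at b from a : b → a, leftward run
        have hadj : D.Adj a b := chain'_pair l1 hch hp
        exact Lrun (l1 ++ [a]).length (l1 ++ [a]) b (c :: l2) le_rfl (by simp [hp])
          (Or.inr ⟨a, l1, rfl, hD.dir_of_not_head hadj h1⟩)
      · -- no head at b from c : b → c, rightward run
        have hadj : D.Adj c b := adj_comm.mp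
          (chain'_pair (l1 ++ [a]) hch (show _ = (l1 ++ [a]) ++ b :: c :: l2 by simp [hp]))
        exact Rrun (c :: l2) b (l1 ++ [a]) (by simp [hp])
          (Or.inr ⟨c, l2, rfl, hD.dir_of_not_head hadj h1⟩)
    have hbvw : b ∈ ({v, w} : Set V) := by
      by_contra hbn
      exact hbnC ⟨hban, hbn⟩
    have hbne := middle_ne hp hnd hh hl
    rcases hbvw with rfl | rfl
    · exact hbne.1 rfl
    · exact hbne.2 rfl
  -- structure of the path
  cases p with
  | nil => simp at hh
  | cons x0 t =>
      have hx0 : x0 = v := by simpa using hh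
      subst hx0
      cases t with
      | nil =>
          have : x0 = w := by simpa using hl
          exact hne this
      | cons b t' =>
          cases t' with
          | nil =>
              have hbw : b = w := by simpa using hl
              have hadj : D.Adj x0 b := (List.isChain_cons_cons.mp hch).1
              exact hna (hbw ▸ hadj)
          | cons c t'' =>
              have hbcol : D.Collider x0 b c := internal_collider x0 b c [] t'' rfl
              cases t'' with
              | nil =>
                  have hcw : c = w := by simpa using hl
                  subst hcw
                  have hbC : b ∈ D.anSet C := (htr x0 b c ⟨[], [], rfl⟩).1 hbcol
                  obtain ⟨z, hz, hanc⟩ := anC_sub hbC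
                  have hd1 : D.Dir x0 b := hD.head_dir hbcol.1
                  have hd2 : D.Dir c b := hD.head_dir hbcol.2
                  rcases hz with rfl | rfl
                  · exact hD.2 z b hd1 hanc
                  · exact hD.2 z b hd2 hanc
              | cons d t''' =>
                  have hccol : D.Collider b c d := internal_collider b c d [x0] t''' rfl
                  exact hD.not_both b c ⟨hccol.1, hbcol.2⟩

lemma dag_ancestral {D : MixedGraph V} (hD : D.IsDAG) : D.Ancestral := by
  refine ⟨hD.2, ?_, ?_⟩
  · intro a b h
    rcases hD.1 a b with h' | h' | h' <;> rw [Undir] at h <;> rw [h'] at h <;> cases h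
  · intro a b h
    rcases hD.1 a b with h' | h' | h' <;> rw [Bidir] at h <;> rw [h'] at h <;> cases h

end MixedGraph
namespace MixedGraph

variable {V : Type} {G K H : MixedGraph V}

/-! ### Counting arrowheads -/

lemma not_headAt_both {a b : V} (hnb : ∀ a b, ¬ K.Bidir a b) (h : K.HeadAt a b) :
    ¬ K.HeadAt b a := by
  rcases h with h | h
  · rintro (h2 | h2) <;> rw [K.symm a b, h] at h2 <;> cases h2
  · exact absurd h (hnb a b)

lemma arr_eq_ncard_headAt [Finite V] (K : MixedGraph V) :
    K.arr = {p : V × V | K.HeadAt p.1 p.2}.ncard := by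
  have hU : {p : V × V | K.HeadAt p.1 p.2} =
      {p : V × V | K.Dir p.1 p.2} ∪ {p : V × V | K.Bidir p.1 p.2} := by
    ext p
    simp [HeadAt, Dir, Bidir, Set.mem_union, Set.mem_setOf_eq]
  have hdisj : Disjoint {p : V × V | K.Dir p.1 p.2} {p : V × V | K.Bidir p.1 p.2} := by
    rw [Set.disjoint_left]
    rintro p h1 h2
    have h1' : K.E p.1 p.2 = .arrowTo := h1
    have h2' : K.E p.1 p.2 = .bidir := h2
    rw [h1'] at h2'
    cases h2'
  rw [hU, Set.ncard_union_eq hdisj (Set.toFinite _) (Set.toFinite _)]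
  rfl

lemma arr_lt_of_bidir [Finite V] [LinearOrder V] {Gm : MixedGraph V} (hG : G.Bidirected)
    (hcomp : ∀ a b, G.Adj a b → (G.Bd a ⊆ G.Bd b ∨ G.Bd b ⊆ G.Bd a))
    (heq : G.MarkovEquiv Gm) (hskel : ∀ a b, G.Adj a b ↔ Gm.Adj a b)
    (hanc : Gm.Ancestral) {v0 w0 : V} (hb : Gm.Bidir v0 w0) : (magOf G).arr < Gm.arr := by
  classical
  set A : Set (V × V) := {p : V × V | (magOf G).HeadAt p.1 p.2} with hA
  set B : Set (V × V) := {p : V × V | Gm.HeadAt p.1 p.2} with hB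
  set φ : V × V → V × V := fun p => if Gm.HeadAt p.1 p.2 then p else (p.2, p.1) with hφ
  have hmaps : ∀ p ∈ A, φ p ∈ B := by
    rintro ⟨a, b⟩ hp
    have hhd : (magOf G).HeadAt a b := hp
    obtain ⟨hadj, hns⟩ := magOf_head_not_simplicial hcomp hhd
    by_cases hgm : Gm.HeadAt a b
    · simpa [hφ, hgm, hB] using hgm
    · have hφp : φ (a, b) = (b, a) := by simp [hφ, hgm]
      rw [hφp]
      show Gm.HeadAt b a
      cases hE : Gm.E a b with
      | none => exact absurd hE ((hskel a b).mp hadj)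
      | undir =>
          exact absurd (undir_simplicial hG heq hskel hanc (undir_symm hE)) hns
      | arrowTo => exact absurd (Or.inl hE) hgm
      | bidir => exact absurd (Or.inr hE) hgm
      | arrowFrom => exact Or.inl (dir_rev hE)
  have hinj : Set.InjOn φ A := by
    rintro ⟨a, b⟩ ha ⟨c, d⟩ hc he
    have ha' : (magOf G).HeadAt a b := ha
    have hc' : (magOf G).HeadAt c d := hc
    have hfa : φ (a, b) = if Gm.HeadAt a b then (a, b) else (b, a) := rfl
    have hfc : φ (c, d) = if Gm.HeadAt c d then (c, d) else (d, c) := rfl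
    rw [hfa, hfc] at he
    by_cases h1 : Gm.HeadAt a b <;> by_cases h2 : Gm.HeadAt c d
    · rw [if_pos h1, if_pos h2] at he
      exact he
    · rw [if_pos h1, if_neg h2, Prod.mk.injEq] at he
      obtain ⟨rfl, rfl⟩ := he
      exact absurd hc' (not_headAt_both (magOf_nb hcomp) ha')
    · rw [if_neg h1, if_pos h2, Prod.mk.injEq] at he
      obtain ⟨rfl, rfl⟩ := he
      exact absurd ha' (not_headAt_both (magOf_nb hcomp) hc')
    · rw [if_neg h1, if_neg h2, Prod.mk.injEq] at he
      obtain ⟨h3, h4⟩ := he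
      subst h3
      subst h4
      rfl
  have hGm1 : Gm.HeadAt v0 w0 := Or.inr hb
  have hGm2 : Gm.HeadAt w0 v0 := Or.inr (bidir_symm hb)
  have hmiss : ∃ t ∈ B, t ∉ φ '' A := by
    by_cases hA1 : (v0, w0) ∈ A
    · refine ⟨(w0, v0), hGm2, ?_⟩
      rintro ⟨⟨a, b⟩, hq, hfq⟩
      have hfq' : (if Gm.HeadAt a b then (a, b) else (b, a)) = (w0, v0) := hfq
      by_cases hgm : Gm.HeadAt a b
      · rw [if_pos hgm, Prod.mk.injEq] at hfq'
        obtain ⟨rfl, rfl⟩ := hfq'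
        exact not_headAt_both (magOf_nb hcomp) hq hA1
      · rw [if_neg hgm, Prod.mk.injEq] at hfq'
        obtain ⟨rfl, rfl⟩ := hfq'
        exact hgm hGm1
    · refine ⟨(v0, w0), hGm1, ?_⟩
      rintro ⟨⟨a, b⟩, hq, hfq⟩
      have hfq' : (if Gm.HeadAt a b then (a, b) else (b, a)) = (v0, w0) := hfq
      by_cases hgm : Gm.HeadAt a b
      · rw [if_pos hgm, Prod.mk.injEq] at hfq'
        obtain ⟨rfl, rfl⟩ := hfq'
        exact hA1 hq
      · rw [if_neg hgm, Prod.mk.injEq] at hfq'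
        obtain ⟨rfl, rfl⟩ := hfq'
        exact hgm hGm2
  obtain ⟨t, htB, htn⟩ := hmiss
  have hssub : φ '' A ⊂ B := by
    rw [Set.ssubset_def]
    refine ⟨?_, fun hsub => htn (hsub htB)⟩
    rintro q ⟨r, hr, rfl⟩
    exact hmaps r hr
  calc (magOf G).arr = A.ncard := arr_eq_ncard_headAt _
    _ = (φ '' A).ncard := (Set.ncard_image_of_injOn hinj).symm
    _ < B.ncard := Set.ncard_lt_ncard hssub (Set.toFinite _)
    _ = Gm.arr := (arr_eq_ncard_headAt _).symm

end MixedGraph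
open MixedGraph in
/-- A bi-directed graph `G` is Markov equivalent to a DAG
iff a minimally oriented graph of `G` contains no bi-directed edges. -/
theorem stmt16 {V : Type} [Finite V] (G Gm : MixedGraph V) (hG : G.Bidirected)
    (hmin : MinOriented G Gm) :
    (∃ D : MixedGraph V, D.IsDAG ∧ G.MarkovEquiv D) ↔ ∀ v w, ¬ Gm.Bidir v w := by
  classical
  obtain ⟨hanc, hmax, heq, hopt⟩ := hmin
  have hGmax : G.Maximal := bidirected_maximal hG
  have hskelGm : ∀ a b, G.Adj a b ↔ Gm.Adj a b := skel_of_equiv hGmax hmax heq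
  letI : Fintype V := Fintype.ofFinite V
  letI : LinearOrder V := LinearOrder.lift' (Fintype.equivFin V) (Equiv.injective _)
  constructor
  · rintro ⟨D, hDdag, hDeq⟩ v0 w0 hb
    have hDmax : D.Maximal := dag_maximal hDdag
    have hskelD : ∀ a b, G.Adj a b ↔ D.Adj a b := skel_of_equiv hGmax hDmax hDeq
    have hcomp : ∀ a b, G.Adj a b → (G.Bd a ⊆ G.Bd b ∨ G.Bd b ⊆ G.Bd a) := by
      intro a b hadj
      by_contra hn
      push_neg at hn
      have hbid : D.Bidir a b := forced_bidir hG hDeq hskelD hadj hn.1 hn.2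
      have hbid' : D.E a b = .bidir := hbid
      rcases hDdag.1 a b with h | h | h <;> rw [h] at hbid' <;> cases hbid'
    have hO := magOf_orients (G := G) hcomp
    have hlt := arr_lt_of_bidir hG hcomp heq hskelGm hanc hb
    have hle := hopt (magOf G) (magOf_ancestral hcomp) hO.maximal (hO.markovEquiv hG)
    omega
  · intro hnb
    have hcomp : ∀ a b, G.Adj a b → (G.Bd a ⊆ G.Bd b ∨ G.Bd b ⊆ G.Bd a) := by
      intro a b hadj
      by_contra hn
      push_neg at hn
      exact hnb a b (forced_bidir hG heq hskelGm hadj hn.1 hn.2)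
    exact ⟨dagOf G, dagOf_isDAG hcomp, (dagOf_orients hcomp).markovEquiv hG⟩
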